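/- Let Ω > 0, let Γ = [[0, −1/(iΩ)], [1/(iΩ), 0]], let δ ∈ ℝ, let X ≠ 0 be real, and let γ ∈ ℂ. Define Y_g = γ·[[sin δ cos δ, −cos²δ], [sin²δ, −sin δ cos δ]] + [[0, 1/X], [−1/X, 0]] and K_g = (1/2)(Y_gΓ + (Y_gΓ)*). Then the eigenvalues of the Hermitian matrix K_g are exactly {−Im(γ)/Ω, 0}. In particular, if Im(γ) < 0 then K_g is positive semidefinite but not positive definite. -/

import Mathlib

open Matrix Complex ComplexOrder

private theorem stmt3_key (Ω : ℝ) (hΩ : 0 < Ω) (s c X : ℝ) (hX : X ≠ 0) (γ : ℂ) :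
    (1 / 2 : ℂ) • ((γ • !![(s : ℂ) * (c : ℂ), -((c : ℂ) ^ 2);
             (s : ℂ) ^ 2, -((s : ℂ) * (c : ℂ))] +
        !![0, 1 / (X : ℂ); -(1 / (X : ℂ)), 0]) * !![0, -(1 / (Complex.I * Ω)); 1 / (Complex.I * Ω), 0] +
        ((γ • !![(s : ℂ) * (c : ℂ), -((c : ℂ) ^ 2);
             (s : ℂ) ^ 2, -((s : ℂ) * (c : ℂ))] +
        !![0, 1 / (X : ℂ); -(1 / (X : ℂ)), 0]) * !![0, -(1 / (Complex.I * Ω)); 1 / (Complex.I * Ω), 0])ᴴ)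
    = ((-γ.im / Ω : ℝ) : ℂ) • !![(c : ℂ)^2, (c:ℂ)*(s:ℂ); (c:ℂ)*(s:ℂ), (s : ℂ)^2] := by
  have hΩ' : (Ω:ℂ) ≠ 0 := by exact_mod_cast hΩ.ne'
  ext i j
  fin_cases i <;> fin_cases j <;>
    · simp [Matrix.mul_apply, Fin.sum_univ_two, Matrix.conjTranspose_apply]
      field_simp
      simp [Complex.ext_iff]
      first | (constructor <;> ring) | ring

private theorem stmt3_spec (t s c : ℝ) (hsc : s^2 + c^2 = 1) :
    spectrum ℂ (((t:ℝ):ℂ) • !![(c : ℂ)^2, (c:ℂ)*(s:ℂ); (c:ℂ)*(s:ℂ), (s : ℂ)^2]) = {((t:ℝ):ℂ), 0} := by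
  ext μ
  simp only [Set.mem_insert_iff, Set.mem_singleton_iff]
  rw [spectrum.mem_iff, Matrix.isUnit_iff_isUnit_det, isUnit_iff_ne_zero, not_ne_iff]
  have hd : (algebraMap ℂ (Matrix (Fin 2) (Fin 2) ℂ) μ - ((t:ℝ):ℂ) • !![(c : ℂ)^2, (c:ℂ)*(s:ℂ); (c:ℂ)*(s:ℂ), (s : ℂ)^2]).det
      = μ * (μ - t) := by
    rw [Matrix.det_fin_two]
    have h : ((s:ℂ))^2 + (c:ℂ)^2 = 1 := by exact_mod_cast congrArg (Complex.ofReal) hsc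
    simp [Matrix.algebraMap_eq_diagonal, Matrix.diagonal]
    linear_combination (-(μ:ℂ) * (t:ℂ)) * h
  rw [hd, mul_eq_zero, sub_eq_zero]
  tauto

private theorem stmt3_psd (t s c : ℝ) (ht : 0 < t) (hsc : s^2 + c^2 = 1) :
    (((t:ℝ):ℂ) • !![(c : ℂ)^2, (c:ℂ)*(s:ℂ); (c:ℂ)*(s:ℂ), (s : ℂ)^2]).PosSemidef ∧
    ¬ (((t:ℝ):ℂ) • !![(c : ℂ)^2, (c:ℂ)*(s:ℂ); (c:ℂ)*(s:ℂ), (s : ℂ)^2]).PosDef := by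
  have hherm : (((t:ℝ):ℂ) • !![(c : ℂ)^2, (c:ℂ)*(s:ℂ); (c:ℂ)*(s:ℂ), (s : ℂ)^2]).IsHermitian := by
    ext i j
    fin_cases i <;> fin_cases j <;>
      simp [Matrix.conjTranspose_apply, ← Complex.ofReal_pow, ← Complex.ofReal_mul,
        Complex.conj_ofReal, mul_comm]
  have hform : ∀ x : Fin 2 → ℂ,
      star x ⬝ᵥ (((t:ℝ):ℂ) • !![(c : ℂ)^2, (c:ℂ)*(s:ℂ); (c:ℂ)*(s:ℂ), (s : ℂ)^2]) *ᵥ x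
      = (t:ℂ) * (star ((c:ℂ) * x 0 + (s:ℂ) * x 1) * ((c:ℂ) * x 0 + (s:ℂ) * x 1)) := by
    intro x
    simp [Matrix.mulVec, dotProduct, Fin.sum_univ_two, star_add, star_mul',
      Complex.star_def, Complex.conj_ofReal]
    ring
  constructor
  · refine Matrix.posSemidef_iff_dotProduct_mulVec.2 ⟨hherm, fun x => ?_⟩
    rw [hform]
    exact mul_nonneg (by exact_mod_cast ht.le) (star_mul_self_nonneg _)
  · intro h
    have hv : (![(s:ℂ), -(c:ℂ)] : Fin 2 → ℂ) ≠ 0 := by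
      intro h0
      have h1 : (s:ℂ) = 0 := congrFun h0 0
      have h2 : -(c:ℂ) = 0 := congrFun h0 1
      have : s = 0 := by exact_mod_cast h1
      have : c = 0 := by exact_mod_cast neg_eq_zero.1 h2
      simp_all
    have h2 := (Matrix.posDef_iff_dotProduct_mulVec.1 h).2 hv
    rw [hform] at h2
    have hz : ((c:ℂ) * (![(s:ℂ), -(c:ℂ)]) 0 + (s:ℂ) * (![(s:ℂ), -(c:ℂ)]) 1) = 0 := by
      simp [mul_comm]
    rw [hz] at h2
    simp at h2

/-- The eigenvalues of the Hermitian matrix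
`K_g = (1/2)(Y_gΓ + (Y_gΓ)*)` are exactly `{−Im γ / Ω, 0}`; in particular if
`Im γ < 0` then `K_g` is positive semidefinite but not positive definite. -/
theorem stmt3 (Ω : ℝ) (hΩ : 0 < Ω) (δ X : ℝ) (hX : X ≠ 0) (γ : ℂ) :
    let Γ : Matrix (Fin 2) (Fin 2) ℂ :=
      !![0, -(1 / (Complex.I * Ω)); 1 / (Complex.I * Ω), 0]
    let Yg : Matrix (Fin 2) (Fin 2) ℂ :=
      γ • !![(Real.sin δ : ℂ) * (Real.cos δ : ℂ), -((Real.cos δ : ℂ) ^ 2);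
             (Real.sin δ : ℂ) ^ 2, -((Real.sin δ : ℂ) * (Real.cos δ : ℂ))] +
        !![0, 1 / (X : ℂ); -(1 / (X : ℂ)), 0]
    let Kg : Matrix (Fin 2) (Fin 2) ℂ := (1 / 2 : ℂ) • (Yg * Γ + (Yg * Γ)ᴴ)
    spectrum ℂ Kg = {((-γ.im / Ω : ℝ) : ℂ), 0} ∧
      (γ.im < 0 → Kg.PosSemidef ∧ ¬Kg.PosDef) := by
  intro Γ Yg Kg
  have hKg : Kg = ((-γ.im / Ω : ℝ) : ℂ) •
      !![(Real.cos δ : ℂ)^2, (Real.cos δ:ℂ)*(Real.sin δ:ℂ);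
         (Real.cos δ:ℂ)*(Real.sin δ:ℂ), (Real.sin δ : ℂ)^2] :=
    stmt3_key Ω hΩ (Real.sin δ) (Real.cos δ) X hX γ
  have hsc : (Real.sin δ)^2 + (Real.cos δ)^2 = 1 := Real.sin_sq_add_cos_sq δ
  rw [hKg]
  refine ⟨stmt3_spec _ _ _ hsc, fun him => ?_⟩
  exact stmt3_psd _ _ _ (div_pos (by linarith) hΩ) hsc
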